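/- The bottom-up table-filling recurrence for ⟨B⟩ is correct: for a track ρ̃ of length m and formula ⟨B⟩φ1, defining T[⟨B⟩φ1, 1] = ⊥ and T[⟨B⟩φ1, i] = T[⟨B⟩φ1, i−1] ∨ T[φ1, i−1] for 2 ≤ i ≤ m, if T[φ1, j] = ⊤ iff K, ρ̃(1,j) ⊨ φ1 for all j, then T[⟨B⟩φ1, i] = ⊤ iff K, ρ̃(1,i) ⊨ ⟨B⟩φ1 for all 1 ≤ i ≤ m. -/
import Mathlib

structure Kripke (AP W : Type) where
  delta : W → W → Prop
  leftTotal : ∀ w, ∃ w', delta w w'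
  mu : W → Set AP
  w0 : W

def IsTrack {AP W : Type} (K : Kripke AP W) (l : List W) : Prop :=
  l ≠ [] ∧ l.Chain' K.delta

inductive HS (AP : Type) where
  | prop : AP → HS AP
  | fls : HS AP
  | neg : HS AP → HS AP
  | and : HS AP → HS AP → HS AP
  | diaA : HS AP → HS AP
  | diaAbar : HS AP → HS AP
  | diaB : HS AP → HS AP
  | diaE : HS AP → HS AP

def sat {AP W : Type} (K : Kripke AP W) : HS AP → List W → Prop
  | .prop p, l => ∀ w ∈ l, p ∈ K.mu w
  | .fls, _ => False
  | .neg φ, l => ¬ sat K φ l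
  | .and φ ψ, l => sat K φ l ∧ sat K ψ l
  | .diaA φ, l => ∃ η, IsTrack K η ∧ η.head? = l.getLast? ∧ sat K φ η
  | .diaAbar φ, l => ∃ η, IsTrack K η ∧ η.getLast? = l.head? ∧ sat K φ η
  | .diaB φ, l => ∃ η, η ≠ [] ∧ η ≠ l ∧ η <+: l ∧ sat K φ η
  | .diaE φ, l => ∃ η, η ≠ [] ∧ η ≠ l ∧ η <:+ l ∧ sat K φ η

def boxB {AP : Type} (φ : HS AP) : HS AP := .neg (.diaB (.neg φ))
def top' {AP : Type} : HS AP := .neg .fls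

lemma diaB_take {AP W : Type} (K : Kripke AP W) (ρ : List W) (φ₁ : HS AP)
    (i : ℕ) (hi : i ≤ ρ.length) :
    sat K (.diaB φ₁) (ρ.take i) ↔ ∃ j, 1 ≤ j ∧ j < i ∧ sat K φ₁ (ρ.take j) := by
  constructor
  · rintro ⟨η, hne, hneq, hpre, hsat⟩
    refine ⟨η.length, ?_, ?_, ?_⟩
    · have := List.length_pos_iff.mpr hne; omega
    · have hle := hpre.length_le
      rw [List.length_take] at hle
      have hlen : η.length ≤ i := le_trans hle (min_le_left _ _)
      rcases lt_or_eq_of_le hlen with h | h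
      · exact h
      · exfalso; apply hneq
        have := List.prefix_iff_eq_take.mp hpre
        rw [this, List.take_take, h, min_self]
    · have := List.prefix_iff_eq_take.mp hpre
      rw [List.take_take] at this
      have hlen : η.length ≤ i := by
        have hle := hpre.length_le
        rw [List.length_take] at hle
        exact le_trans hle (min_le_left _ _)
      rw [min_eq_left hlen] at this
      rwa [← this]
  · rintro ⟨j, hj1, hji, hsat⟩
    refine ⟨ρ.take j, ?_, ?_, ?_, hsat⟩
    · have : (ρ.take j).length = j := by rw [List.length_take]; omega
      intro h; rw [h] at this; simp at this; omega
    · intro h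
      have h1 : (ρ.take j).length = j := by rw [List.length_take]; omega
      have h2 : (ρ.take i).length = i := by rw [List.length_take]; omega
      rw [h, h2] at h1; omega
    · rw [show ρ.take j = (ρ.take i).take j by rw [List.take_take, min_eq_left hji.le]]
      exact List.take_prefix _ _

/-- Correctness of the bottom-up table-filling recurrence for ⟨B⟩. -/
theorem table_diaB_correct {AP W : Type} (K : Kripke AP W) (ρ : List W)
    (hρ : IsTrack K ρ) (φ₁ : HS AP) (T Tφ : ℕ → Prop)
    (hT1 : ¬ T 1)
    (hrec : ∀ i : ℕ, 2 ≤ i → i ≤ ρ.length → (T i ↔ T (i-1) ∨ Tφ (i-1)))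
    (hTφ : ∀ j : ℕ, 1 ≤ j → j ≤ ρ.length → (Tφ j ↔ sat K φ₁ (ρ.take j))) :
    ∀ i : ℕ, 1 ≤ i → i ≤ ρ.length →
      (T i ↔ sat K (.diaB φ₁) (ρ.take i)) := by
  intro i
  induction i with
  | zero => omega
  | succ n ih =>
    intro h1 h2
    rw [diaB_take K ρ φ₁ _ h2]
    rcases Nat.eq_zero_or_pos n with h | h
    · subst h
      constructor
      · intro hT; exact absurd hT hT1
      · rintro ⟨j, hj1, hji, _⟩; omega
    · have hn1 : 1 ≤ n := h
      have hn2 : n ≤ ρ.length := by omega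
      rw [hrec (n+1) (by omega) h2]
      simp only [Nat.add_sub_cancel]
      rw [ih hn1 hn2, hTφ n hn1 hn2, diaB_take K ρ φ₁ n hn2]
      constructor
      · rintro (⟨j, hj1, hjn, hs⟩ | hs)
        · exact ⟨j, hj1, by omega, hs⟩
        · exact ⟨n, hn1, by omega, hs⟩
      · rintro ⟨j, hj1, hjn, hs⟩
        rcases lt_or_eq_of_le (by omega : j ≤ n) with h' | h'
        · exact Or.inl ⟨j, hj1, h', hs⟩
        · exact Or.inr (h' ▸ hs)
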